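/- Let A, B be finite sets of integers, each consisting of integers whose greatest common divisor is 1, with |A| ≥ 2 and |B| ≥ 2, and suppose A·B = P \ {0} for some arithmetic progression P of integers with common difference d. Then for any two elements a₁, a₂ ∈ A, d divides a₁ - a₂; likewise for any two elements b₁, b₂ ∈ B, d divides b₁ - b₂. -/
import Mathlib


open Finset Pointwise

/-- If A, B are sets of coprime integers with A·B an arithmetic progression
minus zero, then the difference of the progression divides all differences
of elements of A, and of B. -/
theorem diff_divides_of_primitive_decomposition
    (A B P : Finset ℤ) (a d : ℤ) (n : ℕ)
    (hAgcd : A.gcd id = 1) (hBgcd : B.gcd id = 1)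
    (hA : 2 ≤ A.card) (hB : 2 ≤ B.card)
    (hP : P = (Finset.range n).image (fun i : ℕ => a + (i : ℤ) * d))
    (hAB : A * B = P.erase 0) :
    (∀ a₁ ∈ A, ∀ a₂ ∈ A, d ∣ a₁ - a₂) ∧ (∀ b₁ ∈ B, ∀ b₂ ∈ B, d ∣ b₁ - b₂) := by
  have key : ∀ x ∈ A * B, d ∣ x - a := by
    intro x hx
    rw [hAB] at hx
    have hx' := Finset.mem_of_mem_erase hx
    rw [hP, Finset.mem_image] at hx'
    obtain ⟨i, _, rfl⟩ := hx'
    exact ⟨i, by ring⟩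
  constructor
  · intro a₁ h₁ a₂ h₂
    have hgcd : d ∣ B.gcd (fun b => (a₁ - a₂) * id b) := by
      apply Finset.dvd_gcd
      intro b hb
      have k1 := key (a₁ * b) (Finset.mul_mem_mul h₁ hb)
      have k2 := key (a₂ * b) (Finset.mul_mem_mul h₂ hb)
      have : (a₁ - a₂) * b = (a₁ * b - a) - (a₂ * b - a) := by ring
      rw [id, this]
      exact dvd_sub k1 k2
    rw [Finset.gcd_mul_left, hBgcd, mul_one] at hgcd
    exact dvd_normalize_iff.mp hgcd
  · intro b₁ h₁ b₂ h₂
    have hgcd : d ∣ A.gcd (fun x => (b₁ - b₂) * id x) := by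
      apply Finset.dvd_gcd
      intro x hx
      have k1 := key (x * b₁) (Finset.mul_mem_mul hx h₁)
      have k2 := key (x * b₂) (Finset.mul_mem_mul hx h₂)
      have : (b₁ - b₂) * x = (x * b₁ - a) - (x * b₂ - a) := by ring
      rw [id, this]
      exact dvd_sub k1 k2
    rw [Finset.gcd_mul_left, hAgcd, mul_one] at hgcd
    exact dvd_normalize_iff.mp hgcd
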